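/- Let P, Q : ℝ² → ℝ be continuously differentiable and everywhere positive, and set K(x,y) = log(Q(x,y)/P(x,y)). Let x, y : I → ℝ be twice differentiable on an open interval I with x'(s) ≠ 0 for all s, satisfying P(x,y)·x''(s) = (P_x·x' + P_y·y')·x'(s) and Q(x,y)·y''(s) = (Q_x·x' + Q_y·y')·y'(s) (all coefficients evaluated at (x(s),y(s))). If g : J → ℝ is a twice differentiable function on an open interval J with g(x(s)) = y(s) for all s ∈ I, then for every s ∈ I one has g''(x(s)) = K_y(x(s),y(s))·(g'(x(s)))² + K_x(x(s),y(s))·g'(x(s)). -/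

import Mathlib

/-- If `(x(s), y(s))` solves the second-order system (8) with `x'(s) ≠ 0`,
and `g` is a twice differentiable function with `g(x(s)) = y(s)`, then `g` satisfies
`g'' = K_y·(g')² + K_x·g'` along the curve, where `K = log(Q/P)`. -/
theorem stmt_2 (P Q : ℝ × ℝ → ℝ) (hP : ContDiff ℝ 1 P) (hQ : ContDiff ℝ 1 Q)
    (hPpos : ∀ p, 0 < P p) (hQpos : ∀ p, 0 < Q p)
    (K : ℝ × ℝ → ℝ) (hK : ∀ p, K p = Real.log (Q p / P p))
    (I : Set ℝ) (hI : IsOpen I) (hIconn : IsPreconnected I)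
    (J : Set ℝ) (hJ : IsOpen J) (hJconn : IsPreconnected J)
    (x y x' y' x'' y'' : ℝ → ℝ)
    (hx : ∀ s ∈ I, HasDerivAt x (x' s) s)
    (hy : ∀ s ∈ I, HasDerivAt y (y' s) s)
    (hx' : ∀ s ∈ I, HasDerivAt x' (x'' s) s)
    (hy' : ∀ s ∈ I, HasDerivAt y' (y'' s) s)
    (hx0 : ∀ s ∈ I, x' s ≠ 0)
    (heq1 : ∀ s ∈ I, P (x s, y s) * x'' s =
      (fderiv ℝ P (x s, y s) (1, 0) * x' s
        + fderiv ℝ P (x s, y s) (0, 1) * y' s) * x' s)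
    (heq2 : ∀ s ∈ I, Q (x s, y s) * y'' s =
      (fderiv ℝ Q (x s, y s) (1, 0) * x' s
        + fderiv ℝ Q (x s, y s) (0, 1) * y' s) * y' s)
    (g g' g'' : ℝ → ℝ)
    (hmem : ∀ s ∈ I, x s ∈ J)
    (hg : ∀ t ∈ J, HasDerivAt g (g' t) t)
    (hg' : ∀ t ∈ J, HasDerivAt g' (g'' t) t)
    (hgy : ∀ s ∈ I, g (x s) = y s) :
    ∀ s ∈ I, g'' (x s) =
      fderiv ℝ K (x s, y s) (0, 1) * (g' (x s)) ^ 2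
        + fderiv ℝ K (x s, y s) (1, 0) * g' (x s) := by

  -- First derivative relation: y' = g'(x)·x' on I
  have claim1 : ∀ t ∈ I, y' t = g' (x t) * x' t := by
    intro t ht
    have hgx : HasDerivAt (fun u => g (x u)) (g' (x t) * x' t) t :=
      (hg (x t) (hmem t ht)).comp t (hx t ht)
    have heqv : (fun u => g (x u)) =ᶠ[nhds t] y :=
      Filter.eventuallyEq_of_mem (hI.mem_nhds ht) (fun u hu => hgy u hu)
    exact (hy t ht).unique (hgx.congr_of_eventuallyEq heqv.symm)
  intro s hs
  set p₀ := (x s, y s) with hp₀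
  have hPne : P p₀ ≠ 0 := (hPpos p₀).ne'
  have hQne : Q p₀ ≠ 0 := (hQpos p₀).ne'
  -- fderiv of K
  have hPd : HasFDerivAt P (fderiv ℝ P p₀) p₀ :=
    (hP.differentiable one_ne_zero p₀).hasFDerivAt
  have hQd : HasFDerivAt Q (fderiv ℝ Q p₀) p₀ :=
    (hQ.differentiable one_ne_zero p₀).hasFDerivAt
  have hlogP : HasFDerivAt (fun p => Real.log (P p)) ((P p₀)⁻¹ • fderiv ℝ P p₀) p₀ := by
    exact (Real.hasDerivAt_log hPne).comp_hasFDerivAt p₀ hPd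
  have hlogQ : HasFDerivAt (fun p => Real.log (Q p)) ((Q p₀)⁻¹ • fderiv ℝ Q p₀) p₀ := by
    exact (Real.hasDerivAt_log hQne).comp_hasFDerivAt p₀ hQd
  have hKeq : K = fun p => Real.log (Q p) - Real.log (P p) := by
    funext p
    rw [hK p, Real.log_div (hQpos p).ne' (hPpos p).ne']
  have hKd : HasFDerivAt K ((Q p₀)⁻¹ • fderiv ℝ Q p₀ - (P p₀)⁻¹ • fderiv ℝ P p₀) p₀ := by
    rw [hKeq]; exact hlogQ.sub hlogP
  have hKf := hKd.fderiv
  -- second derivative relation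
  have hgx' : HasDerivAt (fun u => g' (x u) * x' u)
      (g'' (x s) * x' s * x' s + g' (x s) * x'' s) s :=
    (((hg' (x s) (hmem s hs)).comp s (hx s hs)).mul (hx' s hs))
  have heqv2 : (fun u => g' (x u) * x' u) =ᶠ[nhds s] y' :=
    Filter.eventuallyEq_of_mem (hI.mem_nhds hs) (fun u hu => (claim1 u hu).symm)
  have claim2 : y'' s = g'' (x s) * x' s * x' s + g' (x s) * x'' s :=
    (hy' s hs).unique (hgx'.congr_of_eventuallyEq heqv2.symm)
  -- algebra
  have h1 := heq1 s hs
  have h2 := heq2 s hs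
  have hy's := claim1 s hs
  have ha : x' s ≠ 0 := hx0 s hs
  rw [hKf]
  simp only [ContinuousLinearMap.sub_apply, ContinuousLinearMap.smul_apply, smul_eq_mul]
  rw [← hp₀] at h1 h2
  rw [hy's] at h1 h2
  field_simp
  refine mul_right_cancel₀ (pow_ne_zero 2 ha) ?_
  linear_combination P p₀ * h2 - Q p₀ * P p₀ * claim2 - Q p₀ * g' (x s) * h1
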